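/- Let G = (V, E) be a finite connected graph with |E| even. Then the number of even orientations of G equals 2^{|E| − |V| + 1}, and in particular at least one even orientation exists. -/

import Mathlib

namespace EvenOrientAux

variable {V : Type*} [Fintype V] [DecidableEq V] (G : SimpleGraph V) [DecidableRel G.Adj]

/-- The characteristic vector (over `ZMod 2`) of an edge. -/
def gen (e : G.edgeFinset) : V → ZMod 2 := fun v => if v ∈ (e : Sym2 V) then 1 else 0

/-- The incidence linear map. -/
def B : (G.edgeFinset → ZMod 2) →ₗ[ZMod 2] (V → ZMod 2) where
  toFun x := ∑ e, x e • gen G e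
  map_add' x y := by simp only [Pi.add_apply, add_smul, Finset.sum_add_distrib]
  map_smul' c x := by
    simp only [Pi.smul_apply, smul_eq_mul, RingHom.id_apply, Finset.smul_sum, mul_smul]

/-- The sum-of-coordinates linear functional. -/
def Sl : (V → ZMod 2) →ₗ[ZMod 2] ZMod 2 where
  toFun y := ∑ v, y v
  map_add' x y := by simp [Finset.sum_add_distrib]
  map_smul' c x := by simp [Finset.mul_sum]

/-- Characteristic vector of a vertex. -/
def chi (a : V) : V → ZMod 2 := Pi.single a 1

variable {G}

lemma exists_rep (e : G.edgeFinset) :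
    ∃ a b : V, a ≠ b ∧ (e : Sym2 V) = s(a, b) := by
  obtain ⟨s, hs⟩ := e
  rw [SimpleGraph.mem_edgeFinset] at hs
  induction s using Sym2.ind with
  | _ a b => exact ⟨a, b, ((SimpleGraph.mem_edgeSet G).mp hs).ne, rfl⟩

lemma gen_eq {e : G.edgeFinset} {a b : V} (hab : a ≠ b) (h : (e : Sym2 V) = s(a, b)) :
    gen G e = chi a + chi b := by
  funext v
  simp only [gen, h, Sym2.mem_iff, chi, Pi.add_apply, Pi.single_apply]
  by_cases hva : v = a <;> by_cases hvb : v = b <;> simp_all <;> decide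

lemma Sl_single (a : V) : Sl (chi a) = 1 := by
  simp [Sl, chi, Pi.single_apply, Finset.sum_ite_eq]

lemma Sl_gen (e : G.edgeFinset) : Sl (gen G e) = 0 := by
  obtain ⟨a, b, hab, h⟩ := exists_rep e
  rw [gen_eq hab h, map_add, Sl_single, Sl_single]
  decide

lemma B_single (e0 : G.edgeFinset) : B G (Pi.single e0 1) = gen G e0 := by
  simp only [B, LinearMap.coe_mk, AddHom.coe_mk]
  rw [Finset.sum_eq_single e0]
  · simp
  · intro e _ hne; simp [Pi.single_apply, hne]
  · intro h; exact absurd (Finset.mem_univ e0) h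

lemma range_B (hG : G.Connected) : LinearMap.range (B G) = LinearMap.ker (Sl (V := V)) := by
  apply le_antisymm
  · rintro _ ⟨x, rfl⟩
    simp only [LinearMap.mem_ker, B, LinearMap.coe_mk, AddHom.coe_mk, map_sum, map_smul,
      Sl_gen, smul_zero, Finset.sum_const_zero]
  · intro y hy
    rw [LinearMap.mem_ker] at hy
    obtain ⟨v0⟩ := hG.nonempty
    have hz : ∀ z : ZMod 2, z + z = 0 := by decide
    have walkP : ∀ (a b : V) (_ : G.Walk a b),
        chi a + chi b ∈ LinearMap.range (B G) := by
      intro a b p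
      induction p with
      | nil =>
        have h0 : ∀ w : V, chi w + chi w = (0 : V → ZMod 2) := by
          intro w; funext v; exact hz _
        rw [h0]; exact Submodule.zero_mem _
      | @cons a c b h p ih =>
        have he : s(a, c) ∈ G.edgeFinset := by
          rw [SimpleGraph.mem_edgeFinset]; exact h
        have h1 : gen G ⟨s(a, c), he⟩ ∈ LinearMap.range (B G) :=
          ⟨Pi.single ⟨s(a, c), he⟩ 1, B_single _⟩
        have h2 : gen G ⟨s(a, c), he⟩ = chi a + chi c :=
          gen_eq h.ne rfl
        have h3 : chi a + chi b =
            (chi a + chi c) + (chi c + chi b) := by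
          funext v
          simp only [Pi.add_apply]
          generalize chi a v = x
          generalize chi c v = y
          generalize chi b v = z
          revert x y z; decide
        rw [h3]
        exact Submodule.add_mem _ (h2 ▸ h1) ih
    have key : ∀ u : V, chi u + chi v0 ∈ LinearMap.range (B G) := by
      intro u
      obtain ⟨p⟩ := hG.preconnected u v0
      exact walkP u v0 p
    have ydecomp : y = ∑ u, y u • (chi u + chi v0) := by
      funext v
      rw [Finset.sum_apply]
      simp only [Pi.smul_apply, Pi.add_apply, smul_eq_mul, mul_add, Finset.sum_add_distrib,
        chi, Pi.single_apply, mul_ite, mul_one, mul_zero]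
      rw [Finset.sum_ite_eq Finset.univ v y]
      simp only [Finset.mem_univ, if_true]
      by_cases hv : v = v0
      · simp only [hv, if_true]
        have : (∑ u : V, y u) = 0 := hy
        rw [this, add_zero]
      · simp [hv]
    rw [ydecomp]
    exact Submodule.sum_mem _ fun u _ => Submodule.smul_mem _ _ (key u)

lemma range_Sl_top (v0 : V) : LinearMap.range (Sl (V := V)) = ⊤ := by
  rw [LinearMap.range_eq_top]
  intro c
  refine ⟨c • chi v0, ?_⟩
  simp [Sl, chi, Pi.single_apply, Finset.sum_ite_eq, ← Finset.mul_sum]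


lemma card_ker_B (hG : G.Connected) :
    (Nat.card ↥(LinearMap.ker (B G)) : ℚ) =
      2 ^ ((G.edgeFinset.card : ℤ) - (Fintype.card V : ℤ) + 1) := by
  classical
  obtain ⟨v0⟩ := hG.nonempty
  have h1 := LinearMap.finrank_range_add_finrank_ker (B G)
  have h2 := LinearMap.finrank_range_add_finrank_ker (Sl (V := V))
  rw [range_Sl_top v0, finrank_top, Module.finrank_self,
    Module.finrank_fintype_fun_eq_card] at h2
  rw [range_B hG, Module.finrank_fintype_fun_eq_card, Fintype.card_coe] at h1
  haveI : Fintype ↥(LinearMap.ker (B G)) := Fintype.ofFinite _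
  have hcard : Nat.card ↥(LinearMap.ker (B G)) =
      2 ^ Module.finrank (ZMod 2) ↥(LinearMap.ker (B G)) := by
    rw [Nat.card_eq_fintype_card, Module.card_eq_pow_finrank (K := ZMod 2), ZMod.card]
  rw [hcard]
  have hk : (Module.finrank (ZMod 2) ↥(LinearMap.ker (B G)) : ℤ) =
      (G.edgeFinset.card : ℤ) - (Fintype.card V : ℤ) + 1 := by
    have h3 : Module.finrank (ZMod 2) ↥(LinearMap.ker (Sl (V := V))) =
        Module.finrank (ZMod 2) ↥(LinearMap.ker (Sl (V := V))) := rfl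
    omega
  rw [← hk]
  push_cast
  rw [zpow_natCast]

end EvenOrientAux

open EvenOrientAux in
/-- A finite connected graph with an even number of edges has exactly `2^{|E| - |V| + 1}`
even orientations; in particular an even orientation exists. -/
theorem card_even_orientations_of_even
    {V : Type*} [Fintype V] [DecidableEq V] (G : SimpleGraph V) [DecidableRel G.Adj]
    (hG : G.Connected) (hE : Even G.edgeFinset.card) :
    (Nat.card {f : G.edgeFinset → V //
        (∀ e : G.edgeFinset, (f e : V) ∈ (e : Sym2 V)) ∧
        ∀ v : V, Even (Finset.univ.filter fun e => f e = v).card} : ℚ) =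
      2 ^ ((G.edgeFinset.card : ℤ) - (Fintype.card V : ℤ) + 1) ∧
    Nonempty {f : G.edgeFinset → V //
        (∀ e : G.edgeFinset, (f e : V) ∈ (e : Sym2 V)) ∧
        ∀ v : V, Even (Finset.univ.filter fun e => f e = v).card} := by
  classical
  have hz : ∀ z : ZMod 2, z + z = 0 := by decide
  have hdvd : ∀ n : ℕ, Even n ↔ 2 ∣ n := fun n => by
    rw [Nat.even_iff, Nat.dvd_iff_mod_eq_zero]
  have hz01 : ∀ z : ZMod 2, z = 0 ∨ z = 1 := by decide
  choose f0 f1 hne hrep using fun e : G.edgeFinset => exists_rep (G := G) e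
  set par : (G.edgeFinset → V) → V → ZMod 2 :=
    fun f v => ∑ e, if f e = v then 1 else 0 with hpar_def
  have hparcast : ∀ (f : G.edgeFinset → V) (v : V),
      par f v = ((Finset.univ.filter fun e => f e = v).card : ZMod 2) := by
    intro f v
    rw [Finset.card_filter]
    push_cast
    rfl
  have par_even : ∀ f : G.edgeFinset → V,
      (∀ v, Even (Finset.univ.filter fun e => f e = v).card) ↔ par f = 0 := by
    intro f
    constructor
    · intro h; funext v
      have h0 : (0 : V → ZMod 2) v = 0 := rfl
      rw [h0, hparcast, ZMod.natCast_eq_zero_iff]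
      exact (hdvd _).mp (h v)
    · intro h v
      have h0 := congrFun h v
      rw [hparcast] at h0
      rw [hdvd, ← ZMod.natCast_eq_zero_iff]
      exact h0
  set φ : (G.edgeFinset → ZMod 2) → G.edgeFinset → V :=
    fun x e => if x e = 0 then f0 e else f1 e with hφ_def
  set ψ : (G.edgeFinset → V) → G.edgeFinset → ZMod 2 :=
    fun f e => if f e = f0 e then 0 else 1 with hψ_def
  have hmemφ : ∀ (x) (e : G.edgeFinset), φ x e ∈ ((e : Sym2 V)) := by
    intro x e
    rw [hrep e, Sym2.mem_iff]
    by_cases h : x e = 0 <;> simp [hφ_def, h]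
  have hψφ : ∀ x, ψ (φ x) = x := by
    intro x; funext e
    rcases hz01 (x e) with h | h <;>
      simp [hφ_def, hψ_def, h, (hne e).symm]
  have hφψ : ∀ f : G.edgeFinset → V, (∀ e : G.edgeFinset, f e ∈ (e : Sym2 V)) → φ (ψ f) = f := by
    intro f hf; funext e
    by_cases h : f e = f0 e
    · simp [hφ_def, hψ_def, h]
    · have hm := hf e
      rw [hrep e, Sym2.mem_iff] at hm
      have h1 : f e = f1 e := hm.resolve_left h
      simp [hφ_def, hψ_def, h, h1.symm]
  have hparφ : ∀ x, par (φ x) = par f0 + B G x := by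
    intro x; funext v
    have hB : B G x v = ∑ e, x e * gen G e v := by
      simp [B, Finset.sum_apply]
    show (∑ e, if φ x e = v then (1 : ZMod 2) else 0)
        = (∑ e, if f0 e = v then (1 : ZMod 2) else 0) + B G x v
    rw [hB, ← Finset.sum_add_distrib]
    refine Finset.sum_congr rfl fun e _ => ?_
    rcases hz01 (x e) with h | h
    · simp [hφ_def, h]
    · have hg : gen G e v = if v = f0 e ∨ v = f1 e then 1 else 0 := by
        simp [gen, hrep e, Sym2.mem_iff]
      rw [hg]
      have hφe : φ x e = f1 e := by simp [hφ_def, h]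
      rw [hφe, h, one_mul]
      by_cases h1 : v = f0 e <;> by_cases h2 : v = f1 e
      · exact absurd (h1.symm.trans h2) (hne e)
      · rw [if_neg (fun hh => h2 hh.symm), if_pos h1.symm, if_pos (Or.inl h1)]; decide
      · rw [if_pos h2.symm, if_neg (fun hh => h1 hh.symm), if_pos (Or.inr h2)]; decide
      · rw [if_neg (fun hh => h2 hh.symm), if_neg (fun hh => h1 hh.symm),
          if_neg (by tauto)]; decide
  have hSl_par_f0 : Sl (par f0) = 0 := by
    show (∑ v, ∑ e, if f0 e = v then (1 : ZMod 2) else 0) = 0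
    rw [Finset.sum_comm]
    have h1 : ∀ e : G.edgeFinset, (∑ v, if f0 e = v then (1 : ZMod 2) else 0) = 1 := by
      intro e
      rw [Finset.sum_ite_eq Finset.univ (f0 e) (fun _ => (1 : ZMod 2))]
      simp
    rw [Finset.sum_congr rfl fun e _ => h1 e, Finset.sum_const, nsmul_eq_mul, mul_one,
      Finset.card_univ, Fintype.card_coe, ZMod.natCast_eq_zero_iff]
    exact (hdvd _).mp hE
  have hmemrange : par f0 ∈ LinearMap.range (B G) := by
    rw [range_B hG]
    exact LinearMap.mem_ker.mpr hSl_par_f0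
  obtain ⟨x0, hx0⟩ := hmemrange
  have hadd0 : ∀ g h : V → ZMod 2, g + h = 0 → h = g := by
    intro g h H
    have key : ∀ z w : ZMod 2, z + w = 0 → w = z := by decide
    funext v
    exact key _ _ (congrFun H v)
  have hxx : ∀ x : G.edgeFinset → ZMod 2, (x + x0) + x0 = x := by
    intro x; funext e
    simp only [Pi.add_apply, add_assoc, hz (x0 e), add_zero]
  let eqv : {f : G.edgeFinset → V //
        (∀ e : G.edgeFinset, (f e : V) ∈ (e : Sym2 V)) ∧
        ∀ v : V, Even (Finset.univ.filter fun e => f e = v).card} ≃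
      ↥(LinearMap.ker (B G)) :=
    { toFun := fun a => ⟨ψ a.1 + x0, by
        have hevp := (par_even a.1).mp a.2.2
        have hthis := hparφ (ψ a.1)
        rw [hφψ a.1 a.2.1, hevp] at hthis
        have hB : B G (ψ a.1) = par f0 := hadd0 _ _ hthis.symm
        rw [LinearMap.mem_ker, map_add, hx0, hB]
        funext v; exact hz _⟩
      invFun := fun k => ⟨φ (k.1 + x0), ⟨fun e => hmemφ _ e, by
        apply (par_even _).mpr
        rw [hparφ, map_add, hx0, LinearMap.mem_ker.mp k.2, zero_add]
        funext v; exact hz _⟩⟩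
      left_inv := fun a => Subtype.ext (by
        show φ ((ψ a.1 + x0) + x0) = a.1
        rw [hxx, hφψ a.1 a.2.1])
      right_inv := fun k => Subtype.ext (by
        show ψ (φ (k.1 + x0)) + x0 = k.1
        rw [hψφ, hxx]) }
  constructor
  · rw [Nat.card_congr eqv]
    exact card_ker_B hG
  · exact ⟨eqv.symm ⟨0, Submodule.zero_mem _⟩⟩
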